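/- Let m > 0, κ := 1/(4m), and consider the Schwarzschild metric in regular coordinates (t*, r, θ, φ): the matrix g*(t*,r,θ,φ) with nonzero entries g*₀₀ = −(1−2m/r), g*₀₁ = g*₁₀ = 2m/r, g*₁₁ = 1+2m/r, g*₂₂ = r², g*₃₃ = r² sin²θ, defined on U := {r > 0, 0 < θ < π}. Fix θ₀ ∈ (0,π) and φ₀ ∈ ℝ. Then the curve γ : (0,∞) → U, γ(s) := ((1/κ)·log s, 2m, θ₀, φ₀), is an affinely parametrized null geodesic of g* (a generator of the event horizon), and, with the vector field N^μ(x) := −(g*(x)⁻¹)^{μ0}, its energy satisfies −Σ_{μ,ν} g*_{μν}(γ(s)) N^μ(γ(s)) γ̇^ν(s) = 1/(κ s) = (1/κ)·e^{−κ t*(γ(s))} for all s > 0; i.e., the energy of the horizon generators decays exponentially in t* (the red-shift effect). -/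

import Mathlib

open Matrix

/-- The Christoffel symbols `Γ^μ_{αβ}` of a metric `g` on (an open subset of) `ℝ⁴`. -/
noncomputable def Christoffel (g : (Fin 4 → ℝ) → Matrix (Fin 4) (Fin 4) ℝ)
    (μ α β : Fin 4) (x : Fin 4 → ℝ) : ℝ :=
  (1 / 2) * ∑ ν : Fin 4, (g x)⁻¹ μ ν *
    (fderiv ℝ (fun y => g y ν β) x (Pi.single α 1)
      + fderiv ℝ (fun y => g y ν α) x (Pi.single β 1)
      - fderiv ℝ (fun y => g y α β) x (Pi.single ν 1))

/-- `γ` is an affinely parametrized geodesic of `g` at parameter `s`. -/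
noncomputable def IsGeodesicAt (g : (Fin 4 → ℝ) → Matrix (Fin 4) (Fin 4) ℝ)
    (γ : ℝ → Fin 4 → ℝ) (s : ℝ) : Prop :=
  ∀ μ : Fin 4,
    deriv (fun t => deriv (fun t' => γ t' μ) t) s
      + ∑ α : Fin 4, ∑ β : Fin 4,
          Christoffel g μ α β (γ s) * deriv (fun t => γ t α) s * deriv (fun t => γ t β) s = 0

/-- `γ` is null (with respect to `g`) at parameter `s`. -/
noncomputable def IsNullAt (g : (Fin 4 → ℝ) → Matrix (Fin 4) (Fin 4) ℝ)
    (γ : ℝ → Fin 4 → ℝ) (s : ℝ) : Prop :=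
  ∑ μ : Fin 4, ∑ ν : Fin 4,
    g (γ s) μ ν * deriv (fun t => γ t μ) s * deriv (fun t => γ t ν) s = 0

/-- The Schwarzschild metric in regular `(t*, r, θ, φ)` coordinates. -/
noncomputable def schwarzschildStar (m : ℝ) (x : Fin 4 → ℝ) : Matrix (Fin 4) (Fin 4) ℝ :=
  Matrix.of
    ![![-(1 - 2 * m / x 1), 2 * m / x 1, 0, 0],
      ![2 * m / x 1, 1 + 2 * m / x 1, 0, 0],
      ![0, 0, (x 1) ^ 2, 0],
      ![0, 0, 0, (x 1) ^ 2 * Real.sin (x 2) ^ 2]]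

theorem fd1 (f : ℝ → ℝ) (f' : ℝ) (p : Fin 4 → ℝ) (i α : Fin 4) (hf : HasDerivAt f f' (p i)) :
    fderiv ℝ (fun y => f (y i)) p (Pi.single α 1) = f' * (Pi.single α 1 : Fin 4 → ℝ) i := by
  have h : HasFDerivAt (fun y : Fin 4 → ℝ => f (y i))
      (f' • (ContinuousLinearMap.proj i : ((Fin 4 → ℝ) →L[ℝ] ℝ))) p :=
    hf.comp_hasFDerivAt p (hasFDerivAt_apply i p)
  rw [h.fderiv]; simp

theorem inv_eq (m : ℝ) (hm : m ≠ 0) (θ₀ : ℝ) (hsin : Real.sin θ₀ ≠ 0) (p : Fin 4 → ℝ)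
    (h1 : p 1 = 2*m) (h2 : p 2 = θ₀) :
    (schwarzschildStar m p)⁻¹ = Matrix.of
      ![![-2, 1, 0, 0], ![1, 0, 0, 0],
        ![0, 0, ((2*m)^2)⁻¹, 0], ![0, 0, 0, ((2*m)^2 * Real.sin θ₀ ^ 2)⁻¹]] := by
  apply Matrix.inv_eq_right_inv
  ext i j
  fin_cases i <;> fin_cases j <;>
    simp [schwarzschildStar, Matrix.mul_apply, Fin.sum_univ_four, h1, h2, hm, hsin] <;>
    field_simp <;> ring

theorem christoffel00 (m : ℝ) (hm : 0 < m) (θ₀ : ℝ) (hsin : Real.sin θ₀ ≠ 0) (p : Fin 4 → ℝ)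
    (h1 : p 1 = 2*m) (h2 : p 2 = θ₀) (μ : Fin 4) :
    Christoffel (schwarzschildStar m) μ 0 0 p = if μ = 0 then (4*m)⁻¹ else 0 := by
  have h2m : (2:ℝ)*m ≠ 0 := by positivity
  have hinv : HasDerivAt (fun r : ℝ => r⁻¹) (-(((p 1):ℝ)^2)⁻¹) (p 1) :=
    hasDerivAt_inv (by rw [h1]; exact h2m)
  have hA : HasDerivAt (fun r : ℝ => -(1 - 2*m*r⁻¹)) (2*m * -((p 1)^2)⁻¹) (p 1) :=
    (((hinv.const_mul (2*m)).const_sub 1).neg).congr_deriv (by ring)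
  have hB : HasDerivAt (fun r : ℝ => 2*m*r⁻¹) (2*m * -((p 1)^2)⁻¹) (p 1) :=
    hinv.const_mul (2*m)
  have eA : ∀ α : Fin 4, fderiv ℝ (fun y : Fin 4 → ℝ => -(1 - 2*m*(y 1)⁻¹)) p (Pi.single α 1)
      = (2*m * -((p 1)^2)⁻¹) * (Pi.single α 1 : Fin 4 → ℝ) 1 :=
    fun α => fd1 (fun r : ℝ => -(1 - 2*m*r⁻¹)) _ p 1 α hA
  have eB : ∀ α : Fin 4, fderiv ℝ (fun y : Fin 4 → ℝ => 2*m*(y 1)⁻¹) p (Pi.single α 1)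
      = (2*m * -((p 1)^2)⁻¹) * (Pi.single α 1 : Fin 4 → ℝ) 1 :=
    fun α => fd1 (fun r : ℝ => 2*m*r⁻¹) _ p 1 α hB
  unfold Christoffel
  rw [inv_eq m hm.ne' θ₀ hsin p h1 h2]
  fin_cases μ <;>
    simp only [Fin.sum_univ_four, schwarzschildStar, Matrix.of_apply, Matrix.cons_val',
      Matrix.cons_val_zero, Matrix.cons_val_one, Matrix.head_cons, Matrix.empty_val',
      Matrix.cons_val_fin_one, Matrix.head_fin_const, div_eq_mul_inv, Fin.isValue,
      Matrix.cons_val_two, Matrix.cons_val_three, Matrix.vecHead, Matrix.vecTail,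
      fderiv_const, ContinuousLinearMap.zero_apply, Pi.zero_apply] <;>
    rw [eA 0, eA 1, eA 2, eA 3, eB 0] <;>
    simp [Pi.single_apply, h1] <;>
    first
      | (field_simp <;> ring)
      | exact Or.inl (by simp [Matrix.vecHead, Matrix.vecTail])

/-- Section 3.1.2 of the paper: the curve `s ↦ ((1/κ) log s, 2m, θ₀, φ₀)` is an
affinely parametrized null geodesic of Schwarzschild (a generator of the event
horizon) and its energy with respect to `N^μ = -(g⁻¹)^{μ0}` equals
`1/(κ s) = (1/κ) e^{-κ t*}`: the red-shift effect. -/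
theorem horizon_generator_redshift (m : ℝ) (hm : 0 < m)
    (θ₀ : ℝ) (hθ₀ : θ₀ ∈ Set.Ioo 0 Real.pi) (φ₀ : ℝ) :
    ∀ s : ℝ, 0 < s →
      IsGeodesicAt (schwarzschildStar m)
        (fun t => ![(1 / (1 / (4 * m))) * Real.log t, 2 * m, θ₀, φ₀]) s ∧
      IsNullAt (schwarzschildStar m)
        (fun t => ![(1 / (1 / (4 * m))) * Real.log t, 2 * m, θ₀, φ₀]) s ∧
      (-(∑ μ : Fin 4, ∑ ν : Fin 4,
          schwarzschildStar m (![(1 / (1 / (4 * m))) * Real.log s, 2 * m, θ₀, φ₀]) μ ν *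
            (-(schwarzschildStar m (![(1 / (1 / (4 * m))) * Real.log s, 2 * m, θ₀, φ₀]))⁻¹ μ 0) *
            deriv (fun t => (![(1 / (1 / (4 * m))) * Real.log t, 2 * m, θ₀, φ₀] : Fin 4 → ℝ) ν) s)
        = 1 / ((1 / (4 * m)) * s)) ∧
      (1 / ((1 / (4 * m)) * s)
        = (1 / (1 / (4 * m))) * Real.exp (-(1 / (4 * m)) * ((1 / (1 / (4 * m))) * Real.log s))) := by
  intro s hs
  have hm' : m ≠ 0 := hm.ne'
  have h4 : (1:ℝ) / (1 / (4 * m)) = 4 * m := by field_simp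
  have hsin : Real.sin θ₀ ≠ 0 := (Real.sin_pos_of_pos_of_lt_pi hθ₀.1 hθ₀.2).ne'
  have h2m : (2:ℝ)*m ≠ 0 := by positivity
  simp only [h4]
  set p : Fin 4 → ℝ := ![4 * m * Real.log s, 2 * m, θ₀, φ₀] with hp
  have hp1 : p 1 = 2 * m := by simp [hp]
  have hp2 : p 2 = θ₀ := by simp [hp]
  have hlog : HasDerivAt (fun t : ℝ => 4 * m * Real.log t) (4 * m * s⁻¹) s :=
    (Real.hasDerivAt_log hs.ne').const_mul (4 * m)
  have hd0 : deriv (fun t : ℝ => 4 * m * Real.log t) s = 4 * m * s⁻¹ := hlog.deriv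
  have hdd : deriv (fun t => deriv (fun t' : ℝ => 4 * m * Real.log t') t) s
      = 4 * m * -(s ^ 2)⁻¹ := by
    have hev : (fun t => deriv (fun t' : ℝ => 4 * m * Real.log t') t)
        =ᶠ[nhds s] (fun t : ℝ => 4 * m * t⁻¹) :=
      Filter.eventually_of_mem (Ioi_mem_nhds hs) fun t ht =>
        ((Real.hasDerivAt_log (ne_of_gt ht)).const_mul (4 * m)).deriv
    rw [hev.deriv_eq]
    exact ((hasDerivAt_inv hs.ne').const_mul (4 * m)).deriv
  have hC := christoffel00 m hm θ₀ hsin p hp1 hp2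
  have hInv := inv_eq m hm' θ₀ hsin p hp1 hp2
  refine ⟨?_, ?_, ?_, ?_⟩
  · intro μ
    fin_cases μ <;>
      simp only [Matrix.cons_val_zero, Matrix.cons_val_one, Matrix.head_cons,
        Matrix.cons_val_two, Matrix.cons_val_three, Matrix.vecHead, Matrix.vecTail,
        Fin.sum_univ_four, Fin.isValue] <;>
      simp [hC, ← hp, hd0, hdd, deriv_const] <;>
      field_simp <;> ring
  · show ∑ μ : Fin 4, ∑ ν : Fin 4, _ = 0
    simp only [Fin.sum_univ_four]
    simp [schwarzschildStar, Matrix.cons_val_zero, Matrix.cons_val_one, Matrix.head_cons,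
      Matrix.cons_val_two, Matrix.cons_val_three, Matrix.vecHead, Matrix.vecTail,
      hd0, deriv_const, div_self h2m]
  · rw [hInv]
    simp only [Fin.sum_univ_four]
    simp [schwarzschildStar, hp1, hp2, Matrix.cons_val_zero, Matrix.cons_val_one,
      Matrix.head_cons, Matrix.cons_val_two, Matrix.cons_val_three, Matrix.vecHead,
      Matrix.vecTail, hd0, deriv_const, div_self h2m]
    field_simp
  · have : -(1 / (4 * m)) * (4 * m * Real.log s) = -Real.log s := by
      field_simp
    rw [this, Real.exp_neg, Real.exp_log hs]
    field_simp
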